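/- Let K ⊆ G be finite abstract simplicial complexes with m = |K| and n = |G|. Then the left-padded eigenvalue sequences of the Hodge Laplacians satisfy λ_j(K) ≤ λ_j(G) for all 1 ≤ j ≤ n; equivalently, μ_k(K) ≤ λ_{n−m+k}(G) for all 1 ≤ k ≤ m, where μ_1(K) ≤ … ≤ μ_m(K) are the eigenvalues of the Hodge Laplacian of K. -/

import Mathlib

open Matrix

/-- A finite abstract simplicial complex: a finite collection of nonempty finite
subsets of the totally ordered vertex set `ℕ`, closed under taking nonempty subsets. -/
def IsComplex (G : Finset (Finset ℕ)) : Prop :=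
  (∀ x ∈ G, x.Nonempty) ∧ ∀ x ∈ G, ∀ y ⊆ x, y.Nonempty → y ∈ G

/-- Entry of the exterior derivative: `(-1)^i` if `y ⊂ x`, `|x| = |y| + 1`, and the
unique vertex of `x \ y` sits at position `i` (0-based) in the increasing enumeration
of `x`; `0` otherwise.  (The sum over the singleton `x \ y` extracts that position.) -/
noncomputable def dEntry (x y : Finset ℕ) : ℝ :=
  if y ⊆ x ∧ x.card = y.card + 1 then
    (-1 : ℝ) ^ ((x \ y).sum fun v => (x.filter (fun w => w < v)).card)
  else 0

/-- The exterior derivative of a complex, as a matrix indexed by the simplices. -/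
noncomputable def extDer (G : Finset (Finset ℕ)) :
    Matrix {x // x ∈ G} {x // x ∈ G} ℝ :=
  Matrix.of fun x y => dEntry x.1 y.1

/-- The Dirac matrix `D = d + dᵀ`. -/
noncomputable def dirac (G : Finset (Finset ℕ)) :
    Matrix {x // x ∈ G} {x // x ∈ G} ℝ :=
  extDer G + (extDer G)ᵀ

/-- The Hodge Laplacian `L = D²`. -/
noncomputable def hodge (G : Finset (Finset ℕ)) :
    Matrix {x // x ∈ G} {x // x ∈ G} ℝ :=
  dirac G * dirac G

/-- The ascending list of eigenvalues (with multiplicity) of a real symmetric matrix. -/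
noncomputable def sortedEigs {m : Type*} [Fintype m] [DecidableEq m]
    (A : Matrix m m ℝ) : List ℝ :=
  if h : A.IsHermitian then (Finset.univ.val.map h.eigenvalues).sort (· ≤ ·) else []

/-! ### Auxiliary machinery -/

set_option linter.unusedSectionVars false

open Finset RealInnerProductSpace

/-- Identity coercion giving a `ι → ℝ` vector the `EuclideanSpace` type. -/
def toEuc {ι : Type*} (w : ι → ℝ) : EuclideanSpace ℝ ι := WithLp.toLp 2 w

section Generic

variable {ι : Type*} [Fintype ι] [DecidableEq ι]

/-- Sorted spectral data for a Hermitian real matrix. -/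
lemma exists_sorted_eigen (A : Matrix ι ι ℝ) (hA : A.IsHermitian) :
    ∃ (b : OrthonormalBasis (Fin (Fintype.card ι)) ℝ (EuclideanSpace ℝ ι))
      (g : Fin (Fintype.card ι) → ℝ), Monotone g ∧
      (∀ i, A *ᵥ (b i) = g i • (b i)) ∧ sortedEigs A = List.ofFn g := by
  classical
  set N := Fintype.card ι
  let e : Fin N ≃ ι := (Fintype.equivFin ι).symm
  let f : Fin N → ℝ := hA.eigenvalues ∘ e
  let σ : Equiv.Perm (Fin N) := Tuple.sort f
  let ε : Fin N ≃ ι := σ.trans e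
  refine ⟨hA.eigenvectorBasis.reindex ε.symm, f ∘ σ, Tuple.monotone_sort f, ?_, ?_⟩
  · intro i
    simpa [OrthonormalBasis.reindex_apply, f, ε, Function.comp] using
      hA.mulVec_eigenvectorBasis (ε i)
  · rw [sortedEigs, dif_pos hA]
    refine List.Perm.eq_of_pairwise' (Multiset.pairwise_sort ..)
      ((Tuple.monotone_sort f).sortedLE_ofFn.pairwise) (Multiset.coe_eq_coe.mp ?_)
    rw [Multiset.sort_eq]
    have h1 : (Finset.univ.val : Multiset ι) = Multiset.map ε Finset.univ.val := by
      conv_lhs => rw [← Finset.map_univ_equiv ε]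
      rfl
    rw [h1, Multiset.map_map, Fin.univ_val_map]
    rfl

lemma inner_span_zero (b : OrthonormalBasis (Fin (Fintype.card ι)) ℝ (EuclideanSpace ℝ ι))
    (s : Finset (Fin (Fintype.card ι))) {v : EuclideanSpace ℝ ι}
    (hv : v ∈ Submodule.span ℝ (b '' s)) {i : Fin (Fintype.card ι)} (hi : i ∉ s) :
    ⟪b i, v⟫ = 0 := by
  induction hv using Submodule.span_induction with
  | mem x hx =>
    obtain ⟨j, hj, rfl⟩ := hx
    exact b.orthonormal.2 (fun h => hi (h ▸ hj))
  | zero => exact inner_zero_right _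
  | add x y _ _ hx hy => rw [inner_add_right, hx, hy, add_zero]
  | smul a x _ hx => rw [inner_smul_right, hx, mul_zero]

lemma inner_sum_smul (b : OrthonormalBasis (Fin (Fintype.card ι)) ℝ (EuclideanSpace ℝ ι))
    (a : Fin (Fintype.card ι) → ℝ) (v : EuclideanSpace ℝ ι) :
    ⟪(∑ i, a i • b i : EuclideanSpace ℝ ι), v⟫ = ∑ i, a i * ⟪b i, v⟫ := by
  rw [sum_inner]
  exact Finset.sum_congr rfl fun i _ => real_inner_smul_left _ _ _

lemma quad_expand {A : Matrix ι ι ℝ}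
    (b : OrthonormalBasis (Fin (Fintype.card ι)) ℝ (EuclideanSpace ℝ ι))
    {g : Fin (Fintype.card ι) → ℝ} (hb : ∀ i, A *ᵥ (b i) = g i • (b i))
    (v : EuclideanSpace ℝ ι) :
    ⟪toEuc (A *ᵥ v), v⟫ = ∑ i, g i * (⟪b i, v⟫ * ⟪b i, v⟫) := by
  have hv : toEuc (A *ᵥ v)
      = ∑ i, (⟪b i, v⟫ * g i) • (b i : EuclideanSpace ℝ ι) := by
    have h0 : v = ∑ i, b.repr v i • (b i : EuclideanSpace ℝ ι) := (b.sum_repr v).symm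
    calc toEuc (A *ᵥ v)
        = toEuc (A *ᵥ WithLp.ofLp (∑ i, b.repr v i • (b i : EuclideanSpace ℝ ι))) := by rw [← h0]
      _ = ∑ i, b.repr v i • toEuc (A *ᵥ (b i : EuclideanSpace ℝ ι)) := by
            simp only [toEuc, WithLp.ofLp_sum, WithLp.ofLp_smul, Matrix.mulVec_sum,
              Matrix.mulVec_smul, WithLp.toLp_sum, WithLp.toLp_smul]
      _ = ∑ i, (⟪b i, v⟫ * g i) • (b i : EuclideanSpace ℝ ι) := by
            refine Finset.sum_congr rfl fun i _ => ?_
            have h1 : toEuc (A *ᵥ (b i : EuclideanSpace ℝ ι))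
                = g i • (b i : EuclideanSpace ℝ ι) := by rw [toEuc, hb i]; rfl
            rw [h1, smul_smul, b.repr_apply_apply]
  rw [hv, inner_sum_smul]
  exact Finset.sum_congr rfl fun i _ => by ring

lemma norm_expand (b : OrthonormalBasis (Fin (Fintype.card ι)) ℝ (EuclideanSpace ℝ ι))
    (v : EuclideanSpace ℝ ι) : ⟪v, v⟫ = ∑ i, ⟪b i, v⟫ * ⟪b i, v⟫ := by
  calc ⟪v, v⟫ = ⟪(∑ i, b.repr v i • b i : EuclideanSpace ℝ ι), v⟫ := by rw [b.sum_repr]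
    _ = ∑ i, b.repr v i * ⟪b i, v⟫ := inner_sum_smul b _ v
    _ = ∑ i, ⟪b i, v⟫ * ⟪b i, v⟫ := by simp_rw [b.repr_apply_apply]

lemma rayleigh_upper {A : Matrix ι ι ℝ}
    (b : OrthonormalBasis (Fin (Fintype.card ι)) ℝ (EuclideanSpace ℝ ι))
    {g : Fin (Fintype.card ι) → ℝ} (hb : ∀ i, A *ᵥ (b i) = g i • (b i))
    (s : Finset (Fin (Fintype.card ι))) {c : ℝ} (hc : ∀ i ∈ s, g i ≤ c)
    {v : EuclideanSpace ℝ ι} (hv : v ∈ Submodule.span ℝ (b '' s)) :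
    ⟪toEuc (A *ᵥ v), v⟫ ≤ c * ⟪v, v⟫ := by
  rw [quad_expand b hb, norm_expand b v, Finset.mul_sum]
  refine Finset.sum_le_sum fun i _ => ?_
  by_cases hi : i ∈ s
  · exact mul_le_mul_of_nonneg_right (hc i hi) (mul_self_nonneg _)
  · rw [inner_span_zero b s hv hi]; ring_nf; rfl

lemma rayleigh_lower {A : Matrix ι ι ℝ}
    (b : OrthonormalBasis (Fin (Fintype.card ι)) ℝ (EuclideanSpace ℝ ι))
    {g : Fin (Fintype.card ι) → ℝ} (hb : ∀ i, A *ᵥ (b i) = g i • (b i))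
    (s : Finset (Fin (Fintype.card ι))) {c : ℝ} (hc : ∀ i ∈ s, c ≤ g i)
    {v : EuclideanSpace ℝ ι} (hv : v ∈ Submodule.span ℝ (b '' s)) :
    c * ⟪v, v⟫ ≤ ⟪toEuc (A *ᵥ v), v⟫ := by
  rw [quad_expand b hb, norm_expand b v, Finset.mul_sum]
  refine Finset.sum_le_sum fun i _ => ?_
  by_cases hi : i ∈ s
  · exact mul_le_mul_of_nonneg_right (hc i hi) (mul_self_nonneg _)
  · rw [inner_span_zero b s hv hi]; ring_nf; rfl

lemma finrank_span_image (b : OrthonormalBasis (Fin (Fintype.card ι)) ℝ (EuclideanSpace ℝ ι))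
    (s : Finset (Fin (Fintype.card ι))) :
    Module.finrank ℝ (Submodule.span ℝ (b '' s)) = s.card := by
  classical
  have hli : LinearIndependent ℝ (fun i : {x // x ∈ s} => (b i : EuclideanSpace ℝ ι)) :=
    (b.orthonormal.linearIndependent).comp _ Subtype.val_injective
  have himg : (b '' (s : Set (Fin (Fintype.card ι)))) =
      Set.range (fun i : {x // x ∈ s} => (b i : EuclideanSpace ℝ ι)) :=
    Set.image_eq_range _ _
  rw [himg, finrank_span_eq_card hli, Fintype.card_coe]

end Generic

/-! ### Properties of the Hodge Laplacian -/

lemma dirac_symm (G : Finset (Finset ℕ)) : (dirac G)ᵀ = dirac G := by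
  rw [dirac, transpose_add, transpose_transpose, add_comm]

lemma dirac_conjTranspose (G : Finset (Finset ℕ)) : (dirac G)ᴴ = dirac G := by
  rw [conjTranspose, dirac_symm]
  ext x y
  simp

lemma hodge_herm (G : Finset (Finset ℕ)) : (hodge G).IsHermitian := by
  have h := isHermitian_conjTranspose_mul_self (dirac G)
  rw [dirac_conjTranspose] at h
  exact h

lemma hodge_psd (G : Finset (Finset ℕ)) : (hodge G).PosSemidef := by
  have h := posSemidef_conjTranspose_mul_self (dirac G)
  rw [dirac_conjTranspose] at h
  exact h

lemma sortedEigs_hodge_nonneg (G : Finset (Finset ℕ)) :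
    ∀ a ∈ sortedEigs (hodge G), 0 ≤ a := by
  intro a ha
  rw [sortedEigs, dif_pos (hodge_herm G), Multiset.mem_sort] at ha
  obtain ⟨i, _, rfl⟩ := Multiset.mem_map.mp ha
  exact (hodge_psd G).eigenvalues_nonneg i

open RealInnerProductSpace in
lemma hodge_quad (G : Finset (Finset ℕ)) (v : EuclideanSpace ℝ {x // x ∈ G}) :
    ⟪toEuc (hodge G *ᵥ v), v⟫ = ∑ x, ((dirac G *ᵥ v) x) ^ 2 := by
  have h1 : ⟪toEuc (hodge G *ᵥ v), v⟫ = (hodge G *ᵥ v) ⬝ᵥ (v : {x // x ∈ G} → ℝ) := by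
    simp [PiLp.inner_apply, dotProduct, toEuc, RCLike.inner_apply, mul_comm]
  rw [h1, hodge, ← mulVec_mulVec, dotProduct_comm, dotProduct_mulVec]
  have h2 : (v : {x // x ∈ G} → ℝ) ᵥ* dirac G = dirac G *ᵥ v := by
    conv_lhs => rw [← dirac_symm G]
    exact vecMul_transpose _ _
  rw [h2, dotProduct]
  exact Finset.sum_congr rfl fun x _ => (sq _).symm

/-! ### The embedding of `ℝ^K` into `ℝ^G` -/

section Embed

variable {K G : Finset (Finset ℕ)}

/-- The inclusion of simplices of `K` into simplices of `G`. -/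
def embKG (hKG : K ⊆ G) : {x // x ∈ K} ↪ {x // x ∈ G} :=
  ⟨fun y => ⟨y.1, hKG y.2⟩, fun a b h => Subtype.ext (congrArg Subtype.val h :)⟩

/-- Extension by zero, as a linear map `ℝ^K → ℝ^G`. -/
noncomputable def Emap (hKG : K ⊆ G) :
    EuclideanSpace ℝ {x // x ∈ K} →ₗ[ℝ] EuclideanSpace ℝ {x // x ∈ G} where
  toFun v := WithLp.toLp 2 fun x : {x // x ∈ G} => if h : x.1 ∈ K then v ⟨x.1, h⟩ else 0
  map_add' u v := by
    ext x
    by_cases h : x.1 ∈ K <;> simp [h]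
  map_smul' a v := by
    ext x
    by_cases h : x.1 ∈ K <;> simp [h]

lemma Emap_emb (hKG : K ⊆ G) (v : EuclideanSpace ℝ {x // x ∈ K}) (y : {x // x ∈ K}) :
    Emap hKG v (embKG hKG y) = v y := by
  show (if h : y.1 ∈ K then v ⟨y.1, h⟩ else 0) = v y
  rw [dif_pos y.2]

lemma Emap_not_mem (hKG : K ⊆ G) (v : EuclideanSpace ℝ {x // x ∈ K})
    {x : {x // x ∈ G}} (hx : x.1 ∉ K) : Emap hKG v x = 0 := by
  simp [Emap, hx]

lemma Emap_inj (hKG : K ⊆ G) : Function.Injective (Emap hKG) := by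
  intro u v h
  ext y
  have := congrArg (fun w : EuclideanSpace ℝ {x // x ∈ G} => w (embKG hKG y)) h
  rwa [Emap_emb, Emap_emb] at this

lemma sum_emb (hKG : K ⊆ G) (f : {x // x ∈ G} → ℝ)
    (hf : ∀ x : {x // x ∈ G}, x.1 ∉ K → f x = 0) :
    ∑ x, f x = ∑ y, f (embKG hKG y) := by
  rw [← Finset.sum_map Finset.univ (embKG hKG) f]
  refine (Finset.sum_subset (Finset.subset_univ _) fun x _ hx => hf x fun hmem => ?_).symm
  exact hx (Finset.mem_map.mpr ⟨⟨x.1, hmem⟩, Finset.mem_univ _, Subtype.ext rfl⟩)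

lemma sum_sq_emb_le (hKG : K ⊆ G) (f : {x // x ∈ G} → ℝ) :
    ∑ y, (f (embKG hKG y)) ^ 2 ≤ ∑ x, (f x) ^ 2 := by
  rw [← Finset.sum_map Finset.univ (embKG hKG) (fun x => f x ^ 2)]
  exact Finset.sum_le_sum_of_subset_of_nonneg (Finset.subset_univ _)
    (fun x _ _ => sq_nonneg _)

lemma dirac_entry_eq (hKG : K ⊆ G) (y z : {x // x ∈ K}) :
    dirac G (embKG hKG y) (embKG hKG z) = dirac K y z := by
  rfl

lemma dirac_mulVec_emb (hKG : K ⊆ G) (v : EuclideanSpace ℝ {x // x ∈ K})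
    (y : {x // x ∈ K}) :
    (dirac G *ᵥ Emap hKG v) (embKG hKG y) = (dirac K *ᵥ v) y := by
  show ∑ z, dirac G (embKG hKG y) z * Emap hKG v z = ∑ z, dirac K y z * v z
  rw [sum_emb hKG (fun z => dirac G (embKG hKG y) z * Emap hKG v z)
      (fun z hz => by show dirac G (embKG hKG y) z * Emap hKG v z = 0
                      rw [Emap_not_mem hKG v hz, mul_zero])]
  refine Finset.sum_congr rfl fun z _ => ?_
  rw [Emap_emb, dirac_entry_eq]

open RealInnerProductSpace in
lemma Emap_inner (hKG : K ⊆ G) (v : EuclideanSpace ℝ {x // x ∈ K}) :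
    ⟪Emap hKG v, Emap hKG v⟫ = ⟪v, v⟫ := by
  simp only [PiLp.inner_apply, RCLike.inner_apply, conj_trivial]
  rw [sum_emb hKG _ (fun x hx => by rw [Emap_not_mem hKG v hx, mul_zero])]
  exact Finset.sum_congr rfl fun y _ => by rw [Emap_emb]

open RealInnerProductSpace in
lemma hodge_quad_mono (hKG : K ⊆ G) (v : EuclideanSpace ℝ {x // x ∈ K}) :
    ⟪toEuc (hodge K *ᵥ v), v⟫ ≤ ⟪toEuc (hodge G *ᵥ Emap hKG v), Emap hKG v⟫ := by
  rw [hodge_quad, hodge_quad]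
  calc ∑ y, ((dirac K *ᵥ v) y) ^ 2
      = ∑ y, ((dirac G *ᵥ Emap hKG v) (embKG hKG y)) ^ 2 :=
        Finset.sum_congr rfl fun y _ => by rw [dirac_mulVec_emb]
    _ ≤ ∑ x, ((dirac G *ᵥ Emap hKG v) x) ^ 2 := sum_sq_emb_le hKG _

end Embed

open RealInnerProductSpace in
/-- **Spectral monotonicity** (Theorem 1).  If `K ⊆ G` are finite abstract simplicial
complexes with `m = |K|` and `n = |G|`, then the left-padded ascending eigenvalue
sequences of the Hodge Laplacians satisfy `λ_j(K) ≤ λ_j(G)` for all `j`;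
equivalently `μ_k(K) ≤ λ_{(n-m)+k}(G)` for all `k` (here `j, k` are 0-based). -/
theorem spectral_monotonicity (K G : Finset (Finset ℕ))
    (hK : IsComplex K) (hG : IsComplex G) (hKG : K ⊆ G) :
    (∀ j < G.card,
      ((List.replicate (G.card - K.card) (0 : ℝ)) ++ sortedEigs (hodge K)).getD j 0 ≤
        (sortedEigs (hodge G)).getD j 0) ∧
    (∀ k < K.card,
      (sortedEigs (hodge K)).getD k 0 ≤
        (sortedEigs (hodge G)).getD (G.card - K.card + k) 0) := by
  classical
  have hmn : K.card ≤ G.card := Finset.card_le_card hKG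
  have hmK : Fintype.card {x // x ∈ K} = K.card := Fintype.card_coe K
  have hnG : Fintype.card {x // x ∈ G} = G.card := Fintype.card_coe G
  obtain ⟨bK, gK, hKmono, hbK, hsK⟩ := exists_sorted_eigen (hodge K) (hodge_herm K)
  obtain ⟨bG, gG, hGmono, hbG, hsG⟩ := exists_sorted_eigen (hodge G) (hodge_herm G)
  have part2 : ∀ k < K.card, (sortedEigs (hodge K)).getD k 0 ≤
      (sortedEigs (hodge G)).getD (G.card - K.card + k) 0 := by
    intro k hk
    have hkm : k < Fintype.card {x // x ∈ K} := by omega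
    have hjn : G.card - K.card + k < Fintype.card {x // x ∈ G} := by omega
    set kk : Fin (Fintype.card {x // x ∈ K}) := ⟨k, hkm⟩ with hkk
    set jj : Fin (Fintype.card {x // x ∈ G}) := ⟨G.card - K.card + k, hjn⟩ with hjj
    set W := Submodule.span ℝ (bG '' (Finset.Iic jj)) with hW
    set S := LinearMap.range (Emap hKG) with hS
    set T := Submodule.span ℝ (bK '' (Finset.Ici kk)) with hT
    have hWrank : Module.finrank ℝ W = G.card - K.card + k + 1 := by
      rw [hW, finrank_span_image bG, Fin.card_Iic]
    have hSrank : Module.finrank ℝ S = K.card := by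
      rw [hS, LinearMap.finrank_range_of_inj (Emap_inj hKG), finrank_euclideanSpace, hmK]
    have hTrank : Module.finrank ℝ T = K.card - k := by
      rw [hT, finrank_span_image bK, Fin.card_Ici]
      have hkv : (kk : ℕ) = k := rfl
      omega
    have hWS : k + 1 ≤ Module.finrank ℝ ↥(W ⊓ S) := by
      have h1 := Submodule.finrank_sup_add_finrank_inf_eq W S
      have h2 : Module.finrank ℝ ↥(W ⊔ S) ≤ G.card := by
        have h3 := Submodule.finrank_le (W ⊔ S)
        rwa [finrank_euclideanSpace, hnG] at h3
      omega
    set U := (W ⊓ S).comap (Emap hKG) with hU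
    have hUrank : k + 1 ≤ Module.finrank ℝ ↥U := by
      have hmap : Submodule.map (Emap hKG) U = W ⊓ S := by
        rw [hU, Submodule.map_comap_eq]
        exact inf_eq_right.mpr inf_le_right
      calc k + 1 ≤ Module.finrank ℝ ↥(W ⊓ S) := hWS
        _ = Module.finrank ℝ ↥(Submodule.map (Emap hKG) U) := by rw [hmap]
        _ ≤ Module.finrank ℝ ↥U := Submodule.finrank_map_le _ _
    have hUT : (U ⊓ T) ≠ ⊥ := by
      intro hbot
      have h1 := Submodule.finrank_sup_add_finrank_inf_eq U T
      have h2 : Module.finrank ℝ ↥(U ⊔ T) ≤ K.card := by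
        have h3 := Submodule.finrank_le (U ⊔ T)
        rwa [finrank_euclideanSpace, hmK] at h3
      rw [hbot, finrank_bot] at h1
      omega
    obtain ⟨z, hzUT, hz0⟩ := Submodule.exists_mem_ne_zero_of_ne_bot hUT
    have hzU : z ∈ U := hzUT.1
    have hzT : z ∈ T := hzUT.2
    have hzW : Emap hKG z ∈ W := (Submodule.mem_comap.mp hzU).1
    have c1 : gK kk * ⟪z, z⟫ ≤ ⟪toEuc (hodge K *ᵥ z), z⟫ :=
      rayleigh_lower bK hbK _ (fun i hi => hKmono (Finset.mem_Ici.mp hi)) hzT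
    have c2 := hodge_quad_mono hKG z
    have c3 : ⟪toEuc (hodge G *ᵥ Emap hKG z), Emap hKG z⟫
        ≤ gG jj * ⟪Emap hKG z, Emap hKG z⟫ :=
      rayleigh_upper bG hbG _ (fun i hi => hGmono (Finset.mem_Iic.mp hi)) hzW
    have c4 : ⟪Emap hKG z, Emap hKG z⟫ = ⟪z, z⟫ := Emap_inner hKG z
    have hzpos : (0 : ℝ) < ⟪z, z⟫ := by
      rw [real_inner_self_eq_norm_sq]
      exact pow_pos (norm_pos_iff.mpr hz0) 2
    have hfin : gK kk ≤ gG jj := by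
      rw [c4] at c3
      have h5 := le_trans c1 (le_trans c2 c3)
      exact le_of_mul_le_mul_right h5 hzpos
    rw [hsK, hsG, List.getD_eq_getElem _ _ (by simpa using hkm),
      List.getD_eq_getElem _ _ (by simpa using hjn)]
    simpa using hfin
  refine ⟨?_, part2⟩
  intro j hj
  have hlenK : (sortedEigs (hodge K)).length = K.card := by
    rw [hsK, List.length_ofFn, hmK]
  have hlenG : (sortedEigs (hodge G)).length = G.card := by
    rw [hsG, List.length_ofFn, hnG]
  by_cases hc : j < G.card - K.card
  · rw [List.getD_append _ _ _ _ (by simpa using hc),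
      List.getD_eq_getElem _ _ (by simpa using hc)]
    simp only [List.getElem_replicate]
    have hjl : j < (sortedEigs (hodge G)).length := by omega
    rw [List.getD_eq_getElem _ _ hjl]
    exact sortedEigs_hodge_nonneg G _ (List.getElem_mem _)
  · push_neg at hc
    rw [List.getD_append_right _ _ _ _ (by simpa using hc)]
    have hk : j - (G.card - K.card) < K.card := by omega
    have h6 := part2 _ hk
    simp only [List.length_replicate]
    have hj' : G.card - K.card + (j - (G.card - K.card)) = j := by omega
    rwa [hj'] at h6
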